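/- For the adversarial Witsenhausen problem with |z_i| < √3, the optimal worst-case cost satisfies J_opt,freq >= inf_{P>=0} [ k^2 P + ((√(6/(πe)) - √P)^+)^2 ]. -/

import Mathlib

open Real
open MeasureTheory
open scoped ENNReal

/-- One-shot cost of strategy `(γ1, γ2)` against the realization `(x0, z)` in the
(vector) Witsenhausen problem. -/
noncomputable def advCost (m : ℕ) (k : ℝ)
    (γ1 γ2 : EuclideanSpace ℝ (Fin m) → EuclideanSpace ℝ (Fin m))
    (x0 z : EuclideanSpace ℝ (Fin m)) : ℝ :=
  (k ^ 2 / m) * ‖γ1 x0‖ ^ 2 + (1 / m) * ‖x0 + γ1 x0 - γ2 (x0 + γ1 x0 + z)‖ ^ 2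

lemma coord_le_norm {m : ℕ} (v : EuclideanSpace ℝ (Fin m)) (i : Fin m) : |v i| ≤ ‖v‖ := by
  rw [EuclideanSpace.norm_eq]
  have h1 : |v i| = Real.sqrt (‖v i‖^2) := by
    rw [Real.sqrt_sq_eq_abs, Real.norm_eq_abs, abs_abs]
  rw [h1]
  apply Real.sqrt_le_sqrt
  exact Finset.single_le_sum (f := fun j => ‖v j‖^2) (fun j _ => by positivity) (Finset.mem_univ i)

noncomputable def gridPt (m : ℕ) (s : ℝ) (v : Fin m → ℤ) : EuclideanSpace ℝ (Fin m) :=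
  (WithLp.equiv 2 (Fin m → ℝ)).symm (fun i => (v i : ℝ) * s)

@[simp] lemma gridPt_apply (m : ℕ) (s : ℝ) (v : Fin m → ℤ) (i : Fin m) :
    gridPt m s v i = (v i : ℝ) * s := rfl


lemma gamma_stirling : ∀ n : ℕ, ((n:ℝ)/(2*Real.exp 1)) ^ ((n:ℝ)/2) ≤ Real.Gamma ((n:ℝ)/2 + 1) := by
  have he : (0:ℝ) < Real.exp 1 := Real.exp_pos 1
  intro n
  induction n using Nat.strong_induction_on with
  | _ n ih =>
    match n with
    | 0 => simp [Real.Gamma_one]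
    | 1 =>
      rw [show ((1:ℕ):ℝ)/2 + 1 = (1/2 : ℝ) + 1 by norm_num,
        Real.Gamma_add_one (by norm_num), Real.Gamma_one_half_eq,
        show ((1:ℕ):ℝ)/2 = (1/2:ℝ) by norm_num, ← Real.sqrt_eq_rpow]
      have hsq : (Real.sqrt π)^2 = π := Real.sq_sqrt pi_nonneg
      have hπ : (3:ℝ) < π := pi_gt_three
      have h4 : ((1:ℕ):ℝ)/(2*Real.exp 1) ≤ (1/2*Real.sqrt π)^2 := by
        have := Real.exp_one_gt_d9
        rw [div_le_iff₀ (by positivity)]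
        nlinarith
      calc Real.sqrt (((1:ℕ):ℝ)/(2*Real.exp 1)) ≤ Real.sqrt ((1/2*Real.sqrt π)^2) :=
            Real.sqrt_le_sqrt h4
        _ = 1/2*Real.sqrt π := Real.sqrt_sq (by positivity)
    | (n+2) =>
      have IH := ih n (by omega)
      set x : ℝ := (n:ℝ)/2 with hx
      have hx0 : 0 ≤ x := by positivity
      have hcast : ((n+2:ℕ):ℝ) = (n:ℝ) + 2 := by push_cast; ring
      have hxx : ((n+2:ℕ):ℝ)/2 = x + 1 := by rw [hcast]; ring
      rw [hxx, Real.Gamma_add_one (by positivity)]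
      have hbpos : (0:ℝ) < ((n:ℝ)+2)/(2*Real.exp 1) := by positivity
      have hstep : (((n:ℝ)+2)/(2*Real.exp 1)) ^ x ≤ Real.exp 1 * ((n:ℝ)/(2*Real.exp 1)) ^ x := by
        rcases Nat.eq_zero_or_pos n with h0 | hn
        · subst h0
          simp only [Nat.cast_zero, hx] at *
          norm_num
        · have hnn : (0:ℝ) < n := by exact_mod_cast hn
          have hsplit : (((n:ℝ)+2)/(2*Real.exp 1)) ^ x
              = (((n:ℝ)+2)/(n:ℝ)) ^ x * ((n:ℝ)/(2*Real.exp 1)) ^ x := by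
            rw [← Real.mul_rpow (by positivity) (by positivity)]
            congr 1
            field_simp
          rw [hsplit]
          have hratio : (((n:ℝ)+2)/(n:ℝ)) ^ x ≤ Real.exp 1 := by
            have hb : (0:ℝ) < ((n:ℝ)+2)/(n:ℝ) := by positivity
            rw [Real.rpow_def_of_pos hb]
            have hlog : Real.log (((n:ℝ)+2)/(n:ℝ)) ≤ 2/(n:ℝ) := by
              have h1 : ((n:ℝ)+2)/(n:ℝ) = 1 + 2/(n:ℝ) := by field_simp
              have := Real.log_le_sub_one_of_pos hb
              rw [h1] at this ⊢
              linarith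
            have : x * Real.log (((n:ℝ)+2)/(n:ℝ)) ≤ 1 := by
              have h2 : x * (2/(n:ℝ)) = 1 := by rw [hx]; field_simp
              calc x * Real.log (((n:ℝ)+2)/(n:ℝ)) ≤ x * (2/(n:ℝ)) :=
                    mul_le_mul_of_nonneg_left hlog hx0
                _ = 1 := h2
            exact Real.exp_le_exp.mpr (by linarith [mul_comm x (Real.log (((n:ℝ)+2)/(n:ℝ)))])
          exact mul_le_mul_of_nonneg_right hratio (Real.rpow_nonneg (by positivity) x)
      calc (((n+2:ℕ):ℝ)/(2*Real.exp 1)) ^ (x+1)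
          = ((((n:ℝ)+2))/(2*Real.exp 1)) ^ x * (((n:ℝ)+2)/(2*Real.exp 1)) := by
            rw [hcast, Real.rpow_add_one (ne_of_gt hbpos)]
        _ ≤ (Real.exp 1 * ((n:ℝ)/(2*Real.exp 1)) ^ x) * (((n:ℝ)+2)/(2*Real.exp 1)) :=
            mul_le_mul_of_nonneg_right hstep (le_of_lt hbpos)
        _ = ((n:ℝ)/(2*Real.exp 1)) ^ x * (x + 1) := by
            rw [hx]; field_simp
        _ ≤ Real.Gamma (x + 1) * (x + 1) :=
            mul_le_mul_of_nonneg_right IH (by positivity)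
        _ = (x + 1) * Real.Gamma (x + 1) := mul_comm _ _

lemma point_lemma (m : ℕ) (hm : 0 < m) (k : ℝ) (hk : 0 < k) (c : ℝ) (hc0 : 0 ≤ c)
    (γ1 γ2 : EuclideanSpace ℝ (Fin m) → EuclideanSpace ℝ (Fin m))
    (H : ∀ x0 z : EuclideanSpace ℝ (Fin m), (∀ i, |z i| < Real.sqrt 3) →
      advCost m k γ1 γ2 x0 z ≤ c) :
    ∀ s : ℝ, 0 < s → s < 2*Real.sqrt 3 → ∀ x0 : EuclideanSpace ℝ (Fin m),
      ∃ v : Fin m → ℤ, (∀ i, |(v i : ℝ)| * s ≤ |x0 i| + Real.sqrt (c*m)/k + s/2) ∧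
        ‖x0 - γ2 (gridPt m s v)‖ ≤ Real.sqrt (c*m*(1+1/k^2)) := by
  have hm' : (0:ℝ) < m := by exact_mod_cast hm
  intro s hs hs3 x0
  set u : EuclideanSpace ℝ (Fin m) := γ1 x0 with hu
  set x1 : EuclideanSpace ℝ (Fin m) := x0 + u with hx1
  set v : Fin m → ℤ := fun i => round (x1 i / s) with hv
  set q : EuclideanSpace ℝ (Fin m) := gridPt m s v with hq
  set z : EuclideanSpace ℝ (Fin m) := q - x1 with hz
  have hzi : ∀ i, |z i| ≤ s/2 := by
    intro i
    have hQ : z i = (round (x1 i / s) : ℝ) * s - x1 i := by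
      rw [hz, PiLp.sub_apply, hq, gridPt_apply]
    set w := x1 i / s with hw
    have hxi : x1 i = w * s := by rw [hw]; field_simp
    have hfac : (round w : ℝ) * s - x1 i = ((round w : ℝ) - w) * s := by
      rw [hxi]; ring
    rw [hQ, hfac, abs_mul, abs_of_pos hs, abs_sub_comm]
    have := abs_sub_round w
    nlinarith
  have hzlt : ∀ i, |z i| < Real.sqrt 3 := by
    intro i
    have h23 : s/2 < Real.sqrt 3 := by linarith
    exact lt_of_le_of_lt (hzi i) h23
  have harg : x0 + γ1 x0 + z = q := by
    rw [hz, ← hu, ← hx1]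
    abel
  have hcost := H x0 z hzlt
  unfold advCost at hcost
  rw [harg, ← hu, ← hx1] at hcost
  have hcm : k^2 * ‖u‖^2 + ‖x1 - γ2 q‖^2 ≤ c * m := by
    have h1 : (k^2/m) * ‖u‖^2 + (1/m) * ‖x1 - γ2 q‖^2 ≤ c := hcost
    have h2 := mul_le_mul_of_nonneg_left h1 hm'.le
    have h3 : (m:ℝ) * ((k^2/m) * ‖u‖^2 + (1/m) * ‖x1 - γ2 q‖^2)
        = k^2 * ‖u‖^2 + ‖x1 - γ2 q‖^2 := by
      field_simp
    rw [h3] at h2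
    linarith [h2]
  have hunorm : ‖u‖ ≤ Real.sqrt (c*m)/k := by
    have h2 : (k*‖u‖)^2 ≤ c*m := by nlinarith [sq_nonneg ‖x1 - γ2 q‖]
    have h3 : k * ‖u‖ ≤ Real.sqrt (c*m) := by
      have h4 := Real.sqrt_le_sqrt h2
      rwa [Real.sqrt_sq (by positivity)] at h4
    rw [le_div_iff₀ hk]
    linarith [h3, mul_comm k ‖u‖]
  refine ⟨v, ?_, ?_⟩
  · intro i
    have h1 : |(v i:ℝ)| * s = |(v i:ℝ) * s| := by rw [abs_mul, abs_of_pos hs]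
    have h2 : (v i:ℝ) * s = x1 i + z i := by
      rw [hz, PiLp.sub_apply, hq, gridPt_apply]; ring
    have h3 : x1 i = x0 i + u i := by rw [hx1, PiLp.add_apply]
    have h6 : |u i| ≤ Real.sqrt (c*m)/k := le_trans (coord_le_norm u i) hunorm
    rw [h1, h2, h3]
    calc |x0 i + u i + z i| ≤ |x0 i + u i| + |z i| := abs_add_le _ _
      _ ≤ (|x0 i| + |u i|) + s/2 := add_le_add (abs_add_le _ _) (hzi i)
      _ ≤ |x0 i| + Real.sqrt (c*m)/k + s/2 := by linarith
  · have htri : ‖x0 - γ2 q‖ ≤ ‖u‖ + ‖x1 - γ2 q‖ := by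
      have hd : x0 - γ2 q = (x1 - γ2 q) - u := by rw [hx1]; abel
      rw [hd]
      calc ‖(x1 - γ2 q) - u‖ ≤ ‖x1 - γ2 q‖ + ‖u‖ := norm_sub_le _ _
        _ = ‖u‖ + ‖x1 - γ2 q‖ := by ring
    have hk2 : (0:ℝ) < k^2 := by positivity
    have hsum : (‖u‖ + ‖x1 - γ2 q‖)^2 * k^2 ≤ c*m*(k^2+1) := by
      nlinarith [sq_nonneg (k^2*‖u‖ - ‖x1 - γ2 q‖),
        mul_le_mul_of_nonneg_right hcm (by positivity : (0:ℝ) ≤ k^2+1)]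
    have hsum2 : (‖u‖ + ‖x1 - γ2 q‖)^2 ≤ c*m*(1+1/k^2) := by
      rw [show c*m*(1+1/k^2) = c*m*(k^2+1)/k^2 by field_simp, le_div_iff₀ hk2]
      exact hsum
    have hfin : ‖x0 - γ2 q‖^2 ≤ c*m*(1+1/k^2) := by
      have h7 : ‖x0 - γ2 q‖^2 ≤ (‖u‖ + ‖x1 - γ2 q‖)^2 :=
        pow_le_pow_left₀ (norm_nonneg _) htri 2
      linarith
    rw [show ‖x0 - γ2 q‖ = Real.sqrt (‖x0 - γ2 q‖^2) from (Real.sqrt_sq (norm_nonneg _)).symm]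
    exact Real.sqrt_le_sqrt hfin

lemma volbound_lemma (m : ℕ) (hm : 0 < m) (k : ℝ) (hk : 0 < k) (c : ℝ) (hc0 : 0 ≤ c)
    (γ2 : EuclideanSpace ℝ (Fin m) → EuclideanSpace ℝ (Fin m))
    (G ρ β : ℝ) (hG : G = Real.sqrt (c*m)/k) (hρ : ρ = Real.sqrt (c*m*(1+1/k^2)))
    (hβ : β = Real.sqrt (2*π*Real.exp 1*c*(1+1/k^2)))
    (point : ∀ s : ℝ, 0 < s → s < 2*Real.sqrt 3 → ∀ x0 : EuclideanSpace ℝ (Fin m),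
      ∃ v : Fin m → ℤ, (∀ i, |(v i : ℝ)| * s ≤ |x0 i| + G + s/2) ∧
        ‖x0 - γ2 (gridPt m s v)‖ ≤ ρ) :
    ∀ s : ℝ, 0 < s → s < 2*Real.sqrt 3 → ∀ T : ℝ, 0 < T →
      2*T ≤ (2*((T+G)/s + 2) + 1) * β := by
  haveI : Nonempty (Fin m) := ⟨⟨0, hm⟩⟩
  have hm' : (0:ℝ) < m := by exact_mod_cast hm
  have hG0 : 0 ≤ G := by rw [hG]; positivity
  have hρ0 : 0 ≤ ρ := by rw [hρ]; positivity
  have hβ0 : 0 ≤ β := by rw [hβ]; positivity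
  have he : (0:ℝ) < Real.exp 1 := Real.exp_pos 1
  have hπ : (0:ℝ) < π := pi_pos
  intro s hs hs3 T hT
  set M : ℤ := ⌈(T+G)/s⌉ + 1 with hM
  have hMposR : (0:ℝ) < (M:ℝ) := by
    have h1 : (0:ℝ) ≤ (⌈(T+G)/s⌉ : ℝ) := by
      exact_mod_cast Int.ceil_nonneg (by positivity : (0:ℝ) ≤ (T+G)/s)
    push_cast [hM]
    linarith
  have hM0 : 0 ≤ M := by exact_mod_cast hMposR.le
  set Sf : Finset (Fin m → ℤ) := Fintype.piFinset (fun _ => Finset.Icc (-M) M) with hSf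
  set Box : Set (EuclideanSpace ℝ (Fin m)) := {x | ∀ i, x i ∈ Set.Icc (-T) T} with hBox
  -- covering
  have hcover : Box ⊆ ⋃ v ∈ Sf, Metric.closedBall (γ2 (gridPt m s v)) ρ := by
    intro x0 hx0
    obtain ⟨v, hv1, hv2⟩ := point s hs hs3 x0
    have hmem : v ∈ Sf := by
      rw [hSf, Fintype.mem_piFinset]
      intro i
      rw [Finset.mem_Icc]
      have h1 := hv1 i
      have hxi : |x0 i| ≤ T := abs_le.mpr (hx0 i)
      have hceil := Int.le_ceil ((T+G)/s)
      have h2 : |(v i : ℝ)| * s ≤ ((T+G)/s + 1/2) * s := by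
        have hexp : ((T+G)/s + 1/2) * s = T + G + s/2 := by field_simp
        rw [hexp]
        linarith
      have h2' : |(v i : ℝ)| ≤ (T+G)/s + 1/2 := le_of_mul_le_mul_right h2 hs
      have hvR : |(v i : ℝ)| ≤ (M:ℝ) := by
        have h4 : ((M:ℝ)) = (⌈(T+G)/s⌉ : ℝ) + 1 := by rw [hM]; push_cast; ring
        rw [h4]
        linarith
      have h5 := abs_le.mp hvR
      constructor
      · exact_mod_cast h5.1
      · exact_mod_cast h5.2
    refine Set.mem_biUnion hmem ?_
    rw [Metric.mem_closedBall, dist_eq_norm]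
    exact hv2
  -- volume of the box
  have hvolBox : volume Box = ENNReal.ofReal (2*T) ^ m := by
    have hpre : Box = (@WithLp.ofLp 2 (Fin m → ℝ)) ⁻¹'
        (Set.univ.pi fun _ : Fin m => Set.Icc (-T) T) := by
      ext x
      simp only [hBox, Set.mem_setOf_eq, Set.mem_preimage, Set.mem_pi, Set.mem_univ,
        forall_true_left,
        Set.mem_Icc, forall_const]
    rw [hpre, (PiLp.volume_preserving_ofLp (Fin m)).measure_preimage
      ((MeasurableSet.univ_pi (fun _ => measurableSet_Icc)).nullMeasurableSet)]
    rw [volume_pi_pi]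
    simp [Real.volume_Icc]
    congr 1
    ring_nf
    rw [ENNReal.ofReal_mul' (by norm_num), ENNReal.ofReal_ofNat]
    -- counting
  set N : ℕ := (2*M+1).toNat with hN
  have hNZ : ((N:ℤ)) = 2*M+1 := by
    rw [hN]; exact Int.toNat_of_nonneg (by omega)
  have hNR : (N:ℝ) = 2*(M:ℝ)+1 := by exact_mod_cast congrArg (Int.cast : ℤ → ℝ) hNZ
  have hcardIcc : (Finset.Icc (-M) M).card = N := by
    rw [Int.card_Icc, hN]; congr 1; ring
  have hcard : Sf.card = N ^ m := by
    rw [hSf, Fintype.card_piFinset]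
    simp [hcardIcc]
  set W : ℝ := Real.sqrt π ^ m / Real.Gamma ((m:ℝ)/2+1) with hW
  have hΓpos : 0 < Real.Gamma ((m:ℝ)/2+1) := Real.Gamma_pos_of_pos (by positivity)
  have hW0 : 0 ≤ W := by rw [hW]; positivity
  have hmain : ENNReal.ofReal (2*T) ^ m ≤ (N:ℝ≥0∞)^m *
      (ENNReal.ofReal ρ ^ m * ENNReal.ofReal W) := by
    rw [← hvolBox]
    calc volume Box ≤ volume (⋃ v ∈ Sf, Metric.closedBall (γ2 (gridPt m s v)) ρ) :=
          measure_mono hcover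
      _ ≤ ∑ v ∈ Sf, volume (Metric.closedBall (γ2 (gridPt m s v)) ρ) :=
          measure_biUnion_finset_le _ _
      _ = ∑ _v ∈ Sf, (ENNReal.ofReal ρ ^ m * ENNReal.ofReal W) := by
          refine Finset.sum_congr rfl (fun v _ => ?_)
          rw [EuclideanSpace.volume_closedBall]
          simp [hW, Fintype.card_fin]
      _ = Sf.card • (ENNReal.ofReal ρ ^ m * ENNReal.ofReal W) := Finset.sum_const _
      _ = (N:ℝ≥0∞)^m * (ENNReal.ofReal ρ ^ m * ENNReal.ofReal W) := by
          rw [hcard, nsmul_eq_mul]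
          push_cast
          ring
  have hreal : (2*T) ^ m ≤ (N:ℝ)^m * (ρ^m * W) := by
    have hRHS : (N:ℝ≥0∞)^m * (ENNReal.ofReal ρ ^ m * ENNReal.ofReal W)
        = ENNReal.ofReal ((N:ℝ)^m * (ρ^m * W)) := by
      rw [ENNReal.ofReal_mul (by positivity), ENNReal.ofReal_mul (by positivity),
        ENNReal.ofReal_pow (by positivity), ENNReal.ofReal_pow hρ0,
        ENNReal.ofReal_natCast]
    rw [hRHS, ← ENNReal.ofReal_pow (by positivity : (0:ℝ) ≤ 2*T)] at hmain
    exact (ENNReal.ofReal_le_ofReal_iff (by positivity)).mp hmain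
  -- Stirling bound
  have sqrt_pow_nat : ∀ a : ℝ, 0 ≤ a → (Real.sqrt a)^m = a ^ ((m:ℝ)/2) := by
    intro a ha
    rw [Real.sqrt_eq_rpow, ← Real.rpow_natCast (a ^ ((1:ℝ)/2)) m, ← Real.rpow_mul ha]
    congr 1
    ring
  have hWle : ρ^m * W ≤ β^m := by
    have hΓ := gamma_stirling m
    have hdpos : (0:ℝ) < ((m:ℝ)/(2*Real.exp 1)) ^ ((m:ℝ)/2) :=
      Real.rpow_pos_of_pos (by positivity) _
    have hprod : ((m:ℝ)/(2*Real.exp 1)) ^ ((m:ℝ)/2) * ((2*Real.exp 1)/(m:ℝ)) ^ ((m:ℝ)/2) = 1 := by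
      rw [← Real.mul_rpow (by positivity) (by positivity),
        show ((m:ℝ)/(2*Real.exp 1)) * ((2*Real.exp 1)/(m:ℝ)) = 1 by field_simp,
        Real.one_rpow]
    have h1 : W ≤ Real.sqrt π ^ m * ((2*Real.exp 1)/(m:ℝ)) ^ ((m:ℝ)/2) := by
      rw [hW]
      calc Real.sqrt π ^ m / Real.Gamma ((m:ℝ)/2+1)
          ≤ Real.sqrt π ^ m / (((m:ℝ)/(2*Real.exp 1)) ^ ((m:ℝ)/2)) := by
            gcongr
        _ = Real.sqrt π ^ m * ((2*Real.exp 1)/(m:ℝ)) ^ ((m:ℝ)/2) := by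
            rw [div_eq_iff (ne_of_gt hdpos), mul_assoc, mul_comm (((2*Real.exp 1)/(m:ℝ)) ^ ((m:ℝ)/2)),
              hprod, mul_one]
    have hβeq : β = ρ * (Real.sqrt π * Real.sqrt ((2*Real.exp 1)/(m:ℝ))) := by
      rw [hβ, hρ, ← Real.sqrt_mul pi_nonneg, ← Real.sqrt_mul (by positivity)]
      congr 1
      field_simp
    have hβpow : β^m = ρ^m * (Real.sqrt π ^ m * ((2*Real.exp 1)/(m:ℝ)) ^ ((m:ℝ)/2)) := by
      rw [hβeq, mul_pow, mul_pow, sqrt_pow_nat ((2*Real.exp 1)/(m:ℝ)) (by positivity)]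
    rw [hβpow]
    exact mul_le_mul_of_nonneg_left h1 (by positivity)
  have hfin : (2*T)^m ≤ ((N:ℝ) * β)^m := by
    calc (2*T)^m ≤ (N:ℝ)^m * (ρ^m * W) := hreal
      _ ≤ (N:ℝ)^m * β^m := mul_le_mul_of_nonneg_left hWle (by positivity)
      _ = ((N:ℝ)*β)^m := (mul_pow _ _ _).symm
  have h2T : 2*T ≤ (N:ℝ) * β :=
    le_of_pow_le_pow_left₀ (by omega : m ≠ 0) (by positivity) hfin
  have hMle : (M:ℝ) ≤ (T+G)/s + 2 := by
    have hceil := Int.ceil_lt_add_one ((T+G)/s)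
    rw [hM]
    push_cast
    linarith
  have hNle : (N:ℝ) ≤ 2*((T+G)/s+2)+1 := by rw [hNR]; linarith
  calc 2*T ≤ (N:ℝ)*β := h2T
    _ ≤ (2*((T+G)/s+2)+1)*β := mul_le_mul_of_nonneg_right hNle hβ0

lemma key_lb (m : ℕ) (hm : 0 < m) (k : ℝ) (hk : 0 < k) (c : ℝ)
    (γ1 γ2 : EuclideanSpace ℝ (Fin m) → EuclideanSpace ℝ (Fin m))
    (H : ∀ x0 z : EuclideanSpace ℝ (Fin m), (∀ i, |z i| < Real.sqrt 3) →
      advCost m k γ1 γ2 x0 z ≤ c) :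
    6 / (π * Real.exp 1) * (k ^ 2 / (1 + k ^ 2)) ≤ c := by
  have hm' : (0:ℝ) < m := by exact_mod_cast hm
  have h3 : (0:ℝ) < Real.sqrt 3 := Real.sqrt_pos.mpr (by norm_num)
  have hc0 : 0 ≤ c := by
    refine le_trans ?_ (H 0 0 (fun i => by simpa using h3))
    unfold advCost
    positivity
  set G : ℝ := Real.sqrt (c*m)/k with hG
  have hG0 : 0 ≤ G := by positivity
  set ρ : ℝ := Real.sqrt (c*m*(1+1/k^2)) with hρ
  have hρ0 : 0 ≤ ρ := Real.sqrt_nonneg _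
  set β : ℝ := Real.sqrt (2*π*Real.exp 1*c*(1+1/k^2)) with hβ
  have hβ0 : 0 ≤ β := Real.sqrt_nonneg _
  -- Step 1: pointwise covering property
  have point : ∀ s : ℝ, 0 < s → s < 2*Real.sqrt 3 → ∀ x0 : EuclideanSpace ℝ (Fin m),
      ∃ v : Fin m → ℤ, (∀ i, |(v i : ℝ)| * s ≤ |x0 i| + G + s/2) ∧
        ‖x0 - γ2 (gridPt m s v)‖ ≤ ρ := by
    rw [hG, hρ]
    exact point_lemma m hm k hk c hc0 γ1 γ2 H
  -- Step 2: for every admissible s and T > 0, a bound from volumes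
  have volbound : ∀ s : ℝ, 0 < s → s < 2*Real.sqrt 3 → ∀ T : ℝ, 0 < T →
      2*T ≤ (2*((T+G)/s + 2) + 1) * β :=
    volbound_lemma m hm k hk c hc0 γ2 G ρ β hG hρ hβ point
  -- Step 3: conclude s ≤ β for all s < 2√3
  have sle : ∀ s : ℝ, 0 < s → s < 2*Real.sqrt 3 → s ≤ β := by
    intro s hs hs3
    by_contra hcon
    push_neg at hcon
    set T : ℝ := ((2*G+5*s)*β + s)/(2*(s-β)) with hT
    have hsβ : 0 < s - β := by linarith
    have hTpos : 0 < T := by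
      apply div_pos
      · nlinarith
      · linarith
    have := volbound s hs hs3 T hTpos
    rw [hT] at this
    have h2 : 2*(((2*G+5*s)*β + s)/(2*(s-β))) * (s - β) = (2*G+5*s)*β + s := by
      field_simp
    have h3' : 2*((((2*G+5*s)*β + s)/(2*(s-β))+G)/s + 2) + 1
        = (2*(((2*G+5*s)*β + s)/(2*(s-β))) + 2*G + 5*s)/s := by
      field_simp
      ring
    rw [h3'] at this
    have hrhs : ((2*(((2*G+5*s)*β + s)/(2*(s-β))) + 2*G + 5*s)/s) * β * s
        = (2*(((2*G+5*s)*β + s)/(2*(s-β)))) * β + (2*G + 5*s)*β := by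
      field_simp
      ring
    nlinarith [mul_le_mul_of_nonneg_right this (le_of_lt hs),
      mul_le_mul_of_nonneg_right (le_of_lt hcon) (mul_pos (by linarith : (0:ℝ) < 2) hTpos).le]
  -- Step 4: 2√3 ≤ β
  have h2s : 2*Real.sqrt 3 ≤ β := by
    apply le_of_forall_lt_imp_le_of_dense
    intro a ha
    rcases le_or_gt a 0 with h | h
    · linarith
    · exact sle a h ha
  -- Step 5: conclusion
  have hsq : (2*Real.sqrt 3)^2 ≤ β^2 := by nlinarith
  have hβsq : β^2 = 2*π*Real.exp 1*c*(1+1/k^2) := Real.sq_sqrt (by positivity)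
  have h12 : (2*Real.sqrt 3)^2 = 12 := by
    rw [mul_pow, Real.sq_sqrt (by norm_num : (3:ℝ) ≥ 0)]; norm_num
  rw [h12, hβsq] at hsq
  have hπ : 0 < π := pi_pos
  have he : (0:ℝ) < Real.exp 1 := Real.exp_pos 1
  rw [div_mul_div_comm, div_le_iff₀ (by positivity)]
  have hk2 : (0:ℝ) < k^2 := by positivity
  have hexp : 2*π*Real.exp 1*c*(1+1/k^2) * k^2 = 2*π*Real.exp 1*c*(k^2+1) := by
    field_simp
  nlinarith [mul_le_mul_of_nonneg_right hsq hk2.le]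

/-- Lower bound for the adversarial Witsenhausen problem with `|z_i| < √3`: the optimal
worst-case cost is at least `inf_{P ≥ 0} [k² P + ((√(6/(πe)) - √P)⁺)²]`. -/
theorem adversarial_witsenhausen_lower_bound
    (m : ℕ) (hm : 0 < m) (k : ℝ) (hk : 0 < k) :
    sInf {c : ℝ | ∃ γ1 γ2 : EuclideanSpace ℝ (Fin m) → EuclideanSpace ℝ (Fin m),
        Measurable γ1 ∧ Measurable γ2 ∧
        ∀ x0 z : EuclideanSpace ℝ (Fin m), (∀ i, |z i| < Real.sqrt 3) →
          advCost m k γ1 γ2 x0 z ≤ c} ≥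
      ⨅ P : {p : ℝ // 0 ≤ p},
        (k ^ 2 * P.1 +
          (max (Real.sqrt (6 / (π * Real.exp 1)) - Real.sqrt P.1) 0) ^ 2) := by
  rw [ge_iff_le]
  have hm' : (0:ℝ) < m := by exact_mod_cast hm
  have hπ : (0:ℝ) < π := pi_pos
  have he : (0:ℝ) < Real.exp 1 := Real.exp_pos 1
  set a : ℝ := Real.sqrt (6 / (π * Real.exp 1)) with ha
  have ha0 : 0 ≤ a := Real.sqrt_nonneg _
  have ha2 : a^2 = 6/(π*Real.exp 1) := Real.sq_sqrt (by positivity)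
  apply le_csInf
  · -- the set is nonempty: (γ1, γ2) = (0, id) has worst-case cost ≤ 3
    refine ⟨3, fun _ => 0, id, measurable_const, measurable_id, fun x0 z hz => ?_⟩
    have hzn : ‖z‖^2 ≤ 3*m := by
      rw [EuclideanSpace.norm_eq, Real.sq_sqrt (by positivity)]
      calc ∑ i, ‖z i‖^2 ≤ ∑ _i : Fin m, (3:ℝ) := by
            refine Finset.sum_le_sum (fun i _ => ?_)
            rw [Real.norm_eq_abs]
            have h1 := (hz i).le
            have h2 : |z i|^2 ≤ (Real.sqrt 3)^2 := pow_le_pow_left₀ (abs_nonneg _) h1 2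
            rwa [Real.sq_sqrt (by norm_num : (0:ℝ) ≤ 3)] at h2
        _ = 3*m := by simp [Finset.sum_const, Finset.card_univ]; ring
    have hcost : advCost m k (fun _ => 0) id x0 z = (1/m) * ‖z‖^2 := by
      unfold advCost
      simp only [norm_zero, id_eq]
      rw [show x0 + 0 - (x0 + 0 + z) = -z by abel, norm_neg]
      ring
    rw [hcost]
    rw [div_mul_eq_mul_div, div_le_iff₀ hm']
    linarith
  · rintro b ⟨γ1, γ2, _, _, H⟩
    have hkey := key_lb m hm k hk b γ1 γ2 H
    refine le_trans ?_ hkey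
    have hP : (0:ℝ) ≤ (a/(1+k^2))^2 := sq_nonneg _
    have hbdd : BddBelow (Set.range fun P : {p : ℝ // 0 ≤ p} =>
        k ^ 2 * P.1 + (max (a - Real.sqrt P.1) 0) ^ 2) := by
      refine ⟨0, ?_⟩
      rintro x ⟨P, rfl⟩
      have := P.2
      positivity
    refine le_trans (ciInf_le hbdd (⟨(a/(1+k^2))^2, hP⟩ : {p : ℝ // 0 ≤ p})) ?_
    have hsq : Real.sqrt ((a/(1+k^2))^2) = a/(1+k^2) := Real.sqrt_sq (by positivity)
    simp only [hsq]
    have hmax : max (a - a/(1+k^2)) 0 = a*k^2/(1+k^2) := by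
      rw [max_eq_left]
      · field_simp
        ring
      · have h1 : a/(1+k^2) ≤ a := by
          rw [div_le_iff₀ (by positivity)]
          nlinarith
        linarith
    rw [hmax]
    have hval : k^2*(a/(1+k^2))^2 + (a*k^2/(1+k^2))^2 = a^2*(k^2/(1+k^2)) := by
      field_simp
    rw [hval, ha2]
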